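/- Let r = 2q+1 and q ≥ 1. Then the product (x_1 - x_2)(x_3 - x_4)···(x_{r-2} - x_{r-1}) · e_2(x_1,...,x_r), where e_2 = Σ_{1≤i<j≤r} x_i x_j, lies in the ideal (x_1^2, x_2^2, ..., x_r^2) of K[x_1,...,x_r]. -/
import Mathlib

open MvPolynomial Finset
set_option maxHeartbeats 1000000

lemma E_insert {K : Type*} [CommRing K] {n : ℕ} {s : Finset (Fin n)} {a : Fin n} (ha : a ∉ s) :
    ∑ t ∈ (insert a s).powersetCard 2, ∏ i ∈ t, (X i : MvPolynomial (Fin n) K) =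
      X a * (∑ i ∈ s, X i) + ∑ t ∈ s.powersetCard 2, ∏ i ∈ t, X i := by
  rw [show (2:ℕ) = Nat.succ 1 from rfl, Finset.powersetCard_succ_insert ha 1,
    Finset.sum_union, Finset.sum_image, Finset.powersetCard_one, Finset.sum_map,
    Finset.mul_sum]
  · rw [add_comm]
    congr 1
    refine Finset.sum_congr rfl fun b hb => ?_
    have hab : a ≠ b := fun h => ha (h ▸ hb)
    simp [Finset.prod_insert, hab, mul_comm]
  · intro t ht u hu h
    have hat : a ∉ t := fun h' => ha ((Finset.mem_powersetCard.1 ht).1 h')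
    have hau : a ∉ u := fun h' => ha ((Finset.mem_powersetCard.1 hu).1 h')
    have := congrArg (Finset.erase · a) h
    simpa [Finset.erase_insert, hat, hau] using this
  · rw [Finset.disjoint_right]
    rintro t ht hts
    obtain ⟨u, hu, rfl⟩ := Finset.mem_image.1 ht
    exact ha ((Finset.mem_powersetCard.1 hts).1 (Finset.mem_insert_self a u))

theorem stmt8 (K : Type*) [Field K] (q : ℕ) (hq : 1 ≤ q) :
    (∏ k : Fin q,
        ((X (⟨2 * k.1, by have := k.2; omega⟩ : Fin (2 * q + 1)) : MvPolynomial (Fin (2 * q + 1)) K) -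
          X (⟨2 * k.1 + 1, by have := k.2; omega⟩ : Fin (2 * q + 1)))) *
      esymm (Fin (2 * q + 1)) K 2 ∈
    Ideal.span (Set.range fun i : Fin (2 * q + 1) =>
      (X i : MvPolynomial (Fin (2 * q + 1)) K) ^ 2) := by
  set I := Ideal.span (Set.range fun i : Fin (2 * q + 1) =>
      (X i : MvPolynomial (Fin (2 * q + 1)) K) ^ 2) with hI
  have hsq : ∀ i : Fin (2 * q + 1), (X i : MvPolynomial (Fin (2 * q + 1)) K) ^ 2 ∈ I :=
    fun i => Ideal.subset_span ⟨i, rfl⟩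
  set P := ∏ k : Fin q,
        ((X (⟨2 * k.1, by have := k.2; omega⟩ : Fin (2 * q + 1)) : MvPolynomial (Fin (2 * q + 1)) K) -
          X (⟨2 * k.1 + 1, by have := k.2; omega⟩ : Fin (2 * q + 1))) with hP
  have key : ∀ j, j ≤ q → P * (∑ t ∈ ((univ.filter
      (fun i : Fin (2 * q + 1) => 2 * (q - j) ≤ i.1)).powersetCard 2), ∏ i ∈ t, X i) ∈ I := by
    intro j
    induction j with
    | zero =>
      intro _
      have h1 : (univ.filter (fun i : Fin (2 * q + 1) => 2 * (q - 0) ≤ i.1))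
          = {(⟨2 * q, by omega⟩ : Fin (2 * q + 1))} := by
        ext i
        simp only [Finset.mem_filter, Finset.mem_univ, true_and, Finset.mem_singleton,
          Fin.ext_iff]
        have := i.2
        omega
      rw [h1, Finset.powersetCard_eq_empty.2 (by simp)]
      simp
    | succ j ih =>
      intro hj
      have hk : q - (j + 1) < q := by omega
      set k := q - (j + 1) with hkdef
      set a : Fin (2 * q + 1) := ⟨2 * k, by omega⟩ with hadef
      set b : Fin (2 * q + 1) := ⟨2 * k + 1, by omega⟩ with hbdef
      set S : Finset (Fin (2 * q + 1)) :=
        univ.filter (fun i : Fin (2 * q + 1) => 2 * k + 2 ≤ i.1) with hSdef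
      have hbS : b ∉ S := by simp [hSdef, hbdef]
      have haS : a ∉ insert b S := by
        simp [hSdef, hadef, hbdef, Fin.ext_iff]
      have hsplit : univ.filter (fun i : Fin (2 * q + 1) => 2 * (q - (j + 1)) ≤ i.1)
          = insert a (insert b S) := by
        ext i
        simp only [Finset.mem_filter, Finset.mem_univ, true_and, Finset.mem_insert,
          Fin.ext_iff, hSdef, hadef, hbdef]
        omega
      -- extract the k-th factor from P
      obtain ⟨Q, hPfac⟩ : ∃ Q, P = (X a - X b) * Q :=
        ⟨∏ c ∈ (univ.erase (⟨k, hk⟩ : Fin q)),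
          ((X (⟨2 * c.1, by have := c.2; omega⟩ : Fin (2 * q + 1)) :
              MvPolynomial (Fin (2 * q + 1)) K) -
            X (⟨2 * c.1 + 1, by have := c.2; omega⟩ : Fin (2 * q + 1))), by
          rw [hP]
          exact (Finset.mul_prod_erase univ _ (Finset.mem_univ (⟨k, hk⟩ : Fin q))).symm⟩
      set R : MvPolynomial (Fin (2 * q + 1)) K := ∑ i ∈ S, X i with hR
      set E' : MvPolynomial (Fin (2 * q + 1)) K := ∑ t ∈ S.powersetCard 2, ∏ i ∈ t, X i with hE'
      have hmain : P * (∑ t ∈ ((univ.filter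
          (fun i : Fin (2 * q + 1) => 2 * (q - (j + 1)) ≤ i.1)).powersetCard 2), ∏ i ∈ t, X i)
          = Q * ((X b) * (X a) ^ 2 - (X a) * (X b) ^ 2)
            + (Q * R) * ((X a) ^ 2 - (X b) ^ 2) + P * E' := by
        rw [hsplit, E_insert haS, E_insert hbS, Finset.sum_insert hbS, hPfac]
        rw [← hR, ← hE']
        ring
      have hE'2q : (2 : ℕ) * (q - j) = 2 * k + 2 := by omega
      have hPE' : P * E' ∈ I := by
        have := ih (by omega)
        rwa [hE'2q] at this
      rw [hmain]
      refine add_mem (add_mem ?_ ?_) hPE'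
      · exact Ideal.mul_mem_left _ _ (sub_mem (Ideal.mul_mem_left _ _ (hsq a))
          (Ideal.mul_mem_left _ _ (hsq b)))
      · exact Ideal.mul_mem_left _ _ (sub_mem (hsq a) (hsq b))
  have := key q le_rfl
  simp only [Nat.sub_self, Nat.mul_zero] at this
  have huniv : (univ.filter (fun i : Fin (2 * q + 1) => 0 ≤ i.1)) = univ := by
    simp
  rw [huniv] at this
  exact this
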